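/- Let a, b ∈ ℝ ∖ ℚ and m a nonzero integer, and assume {a m} ≠ 1/2 and {b m} ≠ 1/2 (nearest-integer fractional part). Then there exists δ > 0 such that for every integer n with {a n} ∈ (−δ, δ) and {b n} ∈ (−δ, δ), one has ⌈a(n+m)⌉⌈b(n+m)⌉ = ⌈a n⌉⌈b n⌉ + ⌈a m⌉⌈b n⌉ + ⌈a n⌉⌈b m⌉ + ⌈a m⌉⌈b m⌉. -/

import Mathlib

def Syndetic (S : Set ℤ) : Prop :=
  ∃ L : ℕ, ∀ n : ℤ, ∃ m ∈ S, n ≤ m ∧ m ≤ n + L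

def ThicklySyndetic (S : Set ℤ) : Prop :=
  ∀ L : ℕ, ∃ B : Set ℤ, Syndetic B ∧ ∀ b ∈ B, ∀ j : ℤ, 0 ≤ j → j ≤ (L : ℤ) → b + j ∈ S

def Thick (S : Set ℤ) : Prop :=
  ∀ L : ℕ, ∃ a : ℤ, ∀ j : ℤ, 0 ≤ j → j ≤ (L : ℤ) → a + j ∈ S

noncomputable def nint (a : ℝ) : ℤ := ⌊a + 1/2⌋

noncomputable def sfrac (a : ℝ) : ℝ := a - nint a

lemma sfrac_lt (x : ℝ) : sfrac x < 1/2 := by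
  unfold sfrac nint
  have := Int.lt_floor_add_one (x + 1/2)
  linarith

lemma sfrac_ge (x : ℝ) : -(1/2) ≤ sfrac x := by
  unfold sfrac nint
  have := Int.floor_le (x + 1/2)
  linarith

lemma sfrac_ne_neg_half {x : ℝ} (hx : Irrational x) : sfrac x ≠ -(1/2) := by
  intro h
  unfold sfrac at h
  have : x = (nint x : ℝ) - 1/2 := by linarith
  apply hx.ne_rat ((nint x : ℚ) - 1/2)
  push_cast
  linarith

lemma abs_sfrac_lt {x : ℝ} (hx : Irrational x) : |sfrac x| < 1/2 := by
  have h1 := sfrac_lt x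
  have h2 := sfrac_ge x
  have h3 := sfrac_ne_neg_half hx
  rw [abs_lt]
  constructor <;> [exact lt_of_le_of_ne h2 (Ne.symm h3); exact h1]

lemma nint_add (x y : ℝ) (h1 : -(1/2) < sfrac x + sfrac y)
    (h2 : sfrac x + sfrac y < 1/2) : nint (x + y) = nint x + nint y := by
  simp only [sfrac, nint] at h1 h2 ⊢
  have key : x + y + 1/2 =
      ((x - ⌊x + 1/2⌋) + (y - ⌊y + 1/2⌋) + 1/2) + ((⌊x + 1/2⌋ + ⌊y + 1/2⌋ : ℤ) : ℝ) := by
    push_cast; ring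
  rw [key, Int.floor_add_intCast,
    Int.floor_eq_zero_iff.2 ⟨by simp; linarith, by simp; linarith⟩, zero_add]

theorem nint_product_proper (a b : ℝ) (ha : Irrational a) (hb : Irrational b)
    (m : ℤ) (hm : m ≠ 0) (h1 : sfrac (a * m) ≠ 1/2) (h2 : sfrac (b * m) ≠ 1/2) :
    ∃ δ > (0 : ℝ), ∀ n : ℤ,
      sfrac (a * n) ∈ Set.Ioo (-δ) δ → sfrac (b * n) ∈ Set.Ioo (-δ) δ →
      nint (a * (n + m)) * nint (b * (n + m)) =
        nint (a * n) * nint (b * n) + nint (a * m) * nint (b * n) +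
        nint (a * n) * nint (b * m) + nint (a * m) * nint (b * m) := by
  have ham : Irrational (a * m) := (mul_comm (m:ℝ) a ▸ ha.intCast_mul hm)
  have hbm : Irrational (b * m) := (mul_comm (m:ℝ) b ▸ hb.intCast_mul hm)
  have hA := abs_sfrac_lt ham
  have hB := abs_sfrac_lt hbm
  refine ⟨min (1/2 - |sfrac (a * m)|) (1/2 - |sfrac (b * m)|), by
    apply lt_min <;> linarith, ?_⟩
  intro n hna hnb
  obtain ⟨hna1, hna2⟩ := hna
  obtain ⟨hnb1, hnb2⟩ := hnb
  have hmin1 : min (1/2 - |sfrac (a * m)|) (1/2 - |sfrac (b * m)|) ≤ 1/2 - |sfrac (a * m)| :=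
    min_le_left _ _
  have hmin2 : min (1/2 - |sfrac (a * m)|) (1/2 - |sfrac (b * m)|) ≤ 1/2 - |sfrac (b * m)| :=
    min_le_right _ _
  have habs1 := abs_le.1 (le_of_lt hA)
  have habs2 := abs_le.1 (le_of_lt hB)
  have haA : -(|sfrac (a*m)|) ≤ sfrac (a*m) := neg_abs_le _
  have haA' : sfrac (a*m) ≤ |sfrac (a*m)| := le_abs_self _
  have hbA : -(|sfrac (b*m)|) ≤ sfrac (b*m) := neg_abs_le _
  have hbA' : sfrac (b*m) ≤ |sfrac (b*m)| := le_abs_self _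
  have heqa : nint (a * (n + m)) = nint (a * n) + nint (a * m) := by
    have : a * ((n : ℝ) + (m : ℝ)) = a * n + a * m := by ring
    push_cast
    rw [this]
    exact nint_add _ _ (by linarith) (by linarith)
  have heqb : nint (b * (n + m)) = nint (b * n) + nint (b * m) := by
    have : b * ((n : ℝ) + (m : ℝ)) = b * n + b * m := by ring
    push_cast
    rw [this]
    exact nint_add _ _ (by linarith) (by linarith)
  rw [heqa, heqb]
  ring
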